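/- Assume A² is dense in A. A bounded linear map D : A ⋈^id A → (A ⋈^id A)* is a derivation if and only if there exist derivations D₁, D₂ : A → A* such that D(a,b) = (D₁(a) + D₂(b), D₂(a) + D₂(b)) for all a, b ∈ A (under the identification (A ⋈^id A)* ≅ A* × A*). Moreover, D is the inner derivation implemented by (f,g) if and only if D₁ is inner implemented by f and D₂ is inner implemented by g. -/

import Mathlib

open NormedSpace

/-- The multiplication of `A ⋈^id A`: `(a,b)·(a',b') = (aa', ab' + ba' + bb')`. -/
def amulId {A : Type*} [NonUnitalNormedRing A] (x y : A × A) : A × A :=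
  (x.1 * y.1, x.1 * y.2 + x.2 * y.1 + x.2 * y.2)

/-- `D₁ : A → A*` is a derivation: `D₁(ab) = a·D₁(b) + D₁(a)·b` pointwise, where
`⟨a·f, c⟩ = f(ca)` and `⟨f·b, c⟩ = f(bc)`. -/
def IsDerToDual {A : Type*} [NonUnitalNormedRing A] [NormedSpace ℂ A]
    (D₁ : A →L[ℂ] StrongDual ℂ A) : Prop :=
  ∀ a b c : A, D₁ (a * b) c = D₁ b (c * a) + D₁ a (b * c)

/-- `D : A ⋈^id A → (A ⋈^id A)* ≅ A* × A*` is a derivation, stated by pairing against an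
arbitrary `(c,d)`, for the dual bimodule actions
`(a,b)·(f,g) = (a·f + b·g, (a+b)·g)` and `(f,g)·(a,b) = (f·a + g·b, g·(a+b))`. -/
def IsDerAmalgId {A : Type*} [NonUnitalNormedRing A] [NormedSpace ℂ A]
    (D : (A × A) →L[ℂ] (StrongDual ℂ A × StrongDual ℂ A)) : Prop :=
  ∀ a b a' b' c d : A,
    (D (amulId (a, b) (a', b'))).1 c + (D (amulId (a, b) (a', b'))).2 d
      = ((D (a', b')).1 (c * a) + (D (a', b')).2 (c * b) + (D (a', b')).2 (d * (a + b)))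
        + ((D (a, b)).1 (a' * c) + (D (a, b)).2 (b' * c) + (D (a, b)).2 ((a' + b') * d))

/-- If `A²` is dense in `A`, a continuous linear map vanishing on products vanishes. -/
lemma dense_span_zero' {A : Type*} [NonUnitalNormedRing A] [NormedSpace ℂ A]
    (hA2 : closure ((Submodule.span ℂ {x : A | ∃ a b : A, x = a * b} :
      Submodule ℂ A) : Set A) = Set.univ)
    {E : Type*} [NormedAddCommGroup E] [NormedSpace ℂ E]
    (T : A →L[ℂ] E) (h : ∀ a b : A, T (a * b) = 0) : ∀ x, T x = 0 := by
  have h1 : Submodule.span ℂ {x : A | ∃ a b : A, x = a * b} ≤ LinearMap.ker T :=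
    Submodule.span_le.2 (by rintro x ⟨a, b, rfl⟩; exact h a b)
  have h2 : closure ((Submodule.span ℂ {x : A | ∃ a b : A, x = a * b} :
      Submodule ℂ A) : Set A) ⊆ {x : A | T x = 0} :=
    closure_minimal (fun y hy => LinearMap.mem_ker.1 (h1 hy))
      (isClosed_eq T.continuous continuous_const)
  exact fun x => h2 (hA2 ▸ Set.mem_univ x)

/-- Assume `A²` is dense in `A`. A bounded linear map `D : A ⋈^id A → (A ⋈^id A)*` is a
derivation if and only if `D(a,b) = (D₁(a) + D₂(b), D₂(a) + D₂(b))` for some derivations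
`D₁, D₂ : A → A*`; moreover, `D` is the inner derivation implemented by `(f,g)` if and only
if `D₁` is inner implemented by `f` and `D₂` is inner implemented by `g`. -/
theorem amalgId_derivations {A : Type*} [NonUnitalNormedRing A] [NormedSpace ℂ A]
    [IsScalarTower ℂ A A] [SMulCommClass ℂ A A] [CompleteSpace A]
    (hA2 : closure ((Submodule.span ℂ {x : A | ∃ a b : A, x = a * b} :
      Submodule ℂ A) : Set A) = Set.univ)
    (D : (A × A) →L[ℂ] (StrongDual ℂ A × StrongDual ℂ A)) :
    (IsDerAmalgId D ↔
      ∃ D₁ D₂ : A →L[ℂ] StrongDual ℂ A, IsDerToDual D₁ ∧ IsDerToDual D₂ ∧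
        ∀ a b : A, D (a, b) = (D₁ a + D₂ b, D₂ a + D₂ b)) ∧
    (∀ (D₁ D₂ : A →L[ℂ] StrongDual ℂ A) (f g : StrongDual ℂ A), IsDerToDual D₁ → IsDerToDual D₂ →
      (∀ a b : A, D (a, b) = (D₁ a + D₂ b, D₂ a + D₂ b)) →
      ((∀ a b c d : A,
          (D (a, b)).1 c + (D (a, b)).2 d
            = (f (c * a) + g (c * b) + g (d * (a + b)))
              - (f (a * c) + g (b * c) + g ((a + b) * d))) ↔
        ((∀ a c : A, D₁ a c = f (c * a) - f (a * c)) ∧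
         (∀ a c : A, D₂ a c = g (c * a) - g (a * c))))) := by
  constructor
  · constructor
    · intro hD
      -- candidate maps
      refine ⟨(ContinuousLinearMap.fst ℂ (StrongDual ℂ A) (StrongDual ℂ A)).comp
          (D.comp (ContinuousLinearMap.inl ℂ A A)),
        (ContinuousLinearMap.snd ℂ (StrongDual ℂ A) (StrongDual ℂ A)).comp
          (D.comp (ContinuousLinearMap.inr ℂ A A)), ?_, ?_, ?_⟩
      · -- D₁ is a derivation
        intro a b c
        have := hD a 0 b 0 c 0
        simpa [amulId] using this
      · -- D₂ is a derivation
        intro a b c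
        have := hD 0 a 0 b 0 c
        simpa [amulId] using this
      · -- the formula
        have hii : ∀ a a' d : A,
            (D (0, a * a')).2 d = (D (0, a')).2 (d * a) + (D (0, a)).2 (a' * d) := by
          intro a a' d
          have := hD 0 a 0 a' 0 d
          simpa [amulId] using this
        have hiii : ∀ a b' d : A,
            (D (0, a * b')).2 d = (D (0, b')).2 (d * a) + (D (a, 0)).2 (b' * d) := by
          intro a b' d
          have := hD a 0 0 b' 0 d
          simpa [amulId] using this
        have hpsiphi : ∀ a : A, (D (a, 0)).2 = (D (0, a)).2 := by
          intro a
          have key : ∀ b d : A, ((D (a, 0)).2 - (D (0, a)).2) (b * d) = 0 := by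
            intro b d
            have h2 := hii a b d
            have h3 := hiii a b d
            simp only [ContinuousLinearMap.sub_apply]
            linear_combination h2 - h3
          have hz := dense_span_zero' hA2 ((D (a, 0)).2 - (D (0, a)).2) key
          ext c
          have := hz c
          simp only [ContinuousLinearMap.sub_apply, sub_eq_zero] at this
          exact this
        have hbeta : ∀ b : A, (D (0, b)).1 = (D (0, b)).2 := by
          have key : ∀ b b' : A,
              (((ContinuousLinearMap.fst ℂ (StrongDual ℂ A) (StrongDual ℂ A)).comp
                  (D.comp (ContinuousLinearMap.inr ℂ A A))) -
                ((ContinuousLinearMap.snd ℂ (StrongDual ℂ A) (StrongDual ℂ A)).comp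
                  (D.comp (ContinuousLinearMap.inr ℂ A A)))) (b * b') = 0 := by
            intro b b'
            ext c
            have h4 : (D (0, b * b')).1 c
                = (D (0, b')).2 (c * b) + (D (0, b)).2 (b' * c) := by
              have := hD 0 b 0 b' c 0
              simpa [amulId] using this
            have h5 := hii b b' c
            simp only [ContinuousLinearMap.sub_apply, ContinuousLinearMap.comp_apply,
              ContinuousLinearMap.inr_apply, ContinuousLinearMap.coe_fst',
              ContinuousLinearMap.coe_snd', ContinuousLinearMap.zero_apply]
            linear_combination h4 - h5
          have hz := dense_span_zero' hA2 _ key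
          intro b
          have := hz b
          simp only [ContinuousLinearMap.sub_apply, ContinuousLinearMap.comp_apply,
            ContinuousLinearMap.inr_apply, ContinuousLinearMap.coe_fst',
            ContinuousLinearMap.coe_snd', sub_eq_zero] at this
          exact this
        intro a b
        have hsplit : D (a, b) = D (a, 0) + D (0, b) := by
          rw [← map_add]
          norm_num
        refine Prod.ext ?_ ?_
        · simp only [hsplit, Prod.fst_add, ContinuousLinearMap.comp_apply,
            ContinuousLinearMap.inl_apply, ContinuousLinearMap.inr_apply,
            ContinuousLinearMap.coe_fst', ContinuousLinearMap.coe_snd']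
          rw [hbeta b]
        · simp only [hsplit, Prod.snd_add, ContinuousLinearMap.comp_apply,
            ContinuousLinearMap.inl_apply, ContinuousLinearMap.inr_apply,
            ContinuousLinearMap.coe_fst', ContinuousLinearMap.coe_snd']
          rw [hpsiphi a]
    · rintro ⟨D₁, D₂, h1, h2, hform⟩
      replace h1 : ∀ a b c : A, D₁ (a * b) c = D₁ b (c * a) + D₁ a (b * c) := h1
      replace h2 : ∀ a b c : A, D₂ (a * b) c = D₂ b (c * a) + D₂ a (b * c) := h2
      intro a b a' b' c d
      simp only [amulId]
      rw [hform, hform, hform]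
      simp only [mul_add, add_mul, map_add, ContinuousLinearMap.add_apply, h1, h2]
      ring
  · intro D₁ D₂ f g h1 h2 hform
    constructor
    · intro hin
      constructor
      · intro a c
        have := hin a 0 c 0
        simpa [hform] using this
      · intro a c
        have := hin a 0 0 c
        simpa [hform] using this
    · rintro ⟨hf, hg⟩ a b c d
      simp only [hform, ContinuousLinearMap.add_apply, hf, hg, mul_add, add_mul, map_add]
      ring
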